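/- Let D and D' be division rings, and let n, m', n' be integers with m', n' ≥ n ≥ 2. Suppose φ : D^{n×n} → D'^{m'×n'} is a graph homomorphism with φ(0) = 0 and rank(φ(I_n)) = n, where I_n is the n×n identity matrix. Then there exist invertible matrices P ∈ GL_{m'}(D') and Q ∈ GL_{n'}(D') such that for every r = 1, …, n, φ(diag(I_r, 0)) = P · diag(I_r, 0_{m'−r, n'−r}) · Q, where diag(I_r, 0) denotes the n×n (respectively m'×n') matrix with the r×r identity in the upper-left corner and zeros elsewhere. -/
import Mathlib


open Matrix Function

/-- The rank of a matrix over a division ring: the dimension of its left row space. -/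
noncomputable def rk {D : Type*} [DivisionRing D] {m n : ℕ}
    (A : Matrix (Fin m) (Fin n) D) : ℕ :=
  Module.finrank D (Submodule.span D (Set.range fun i => A i))

/-- A nonempty set of matrices, any two distinct members of which are adjacent
(`rk (A - B) = 1`). -/
def IsAdjSet {D : Type*} [DivisionRing D] {m n : ℕ}
    (S : Set (Matrix (Fin m) (Fin n) D)) : Prop :=
  S.Nonempty ∧ ∀ A ∈ S, ∀ B ∈ S, A ≠ B → rk (A - B) = 1

/-- A maximal set: an adjacent set which is maximal under inclusion. -/
def IsMaxSet {D : Type*} [DivisionRing D] {m n : ℕ}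
    (S : Set (Matrix (Fin m) (Fin n) D)) : Prop :=
  IsAdjSet S ∧ ∀ T : Set (Matrix (Fin m) (Fin n) D), IsAdjSet T → S ⊆ T → T = S

/-- `M₁`: matrices whose rows other than the first are zero. -/
def M1set (D : Type*) [DivisionRing D] (m n : ℕ) : Set (Matrix (Fin m) (Fin n) D) :=
  {X | ∀ (i : Fin m) (j : Fin n), (i : ℕ) ≠ 0 → X i j = 0}

/-- `N₁`: matrices whose columns other than the first are zero. -/
def N1set (D : Type*) [DivisionRing D] (m n : ℕ) : Set (Matrix (Fin m) (Fin n) D) :=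
  {X | ∀ (i : Fin m) (j : Fin n), (j : ℕ) ≠ 0 → X i j = 0}

/-- A maximal set of type one: `P·M₁ + A` with `P` invertible. -/
def IsTypeOne {D : Type*} [DivisionRing D] {m n : ℕ}
    (S : Set (Matrix (Fin m) (Fin n) D)) : Prop :=
  ∃ (P : Matrix (Fin m) (Fin m) D) (A : Matrix (Fin m) (Fin n) D),
    IsUnit P ∧ S = (fun X => P * X + A) '' M1set D m n

/-- A maximal set of type two: `N₁·Q + A` with `Q` invertible. -/
def IsTypeTwo {D : Type*} [DivisionRing D] {m n : ℕ}
    (S : Set (Matrix (Fin m) (Fin n) D)) : Prop :=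
  ∃ (Q : Matrix (Fin n) (Fin n) D) (A : Matrix (Fin m) (Fin n) D),
    IsUnit Q ∧ S = (fun X => X * Q + A) '' N1set D m n

/-- Two maximal sets of different types. -/
def DiffTypes {D : Type*} [DivisionRing D] {m n : ℕ}
    (M N : Set (Matrix (Fin m) (Fin n) D)) : Prop :=
  (IsTypeOne M ∧ IsTypeTwo N) ∨ (IsTypeTwo M ∧ IsTypeOne N)

/-- The unit ball `B_A = D^{m×n}_{≤1} + A`. -/
def uball {D : Type*} [DivisionRing D] {m n : ℕ}
    (A : Matrix (Fin m) (Fin n) D) : Set (Matrix (Fin m) (Fin n) D) :=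
  {X | rk (X - A) ≤ 1}

/-- A graph homomorphism: adjacency-preserving map. -/
def IsGraphHom {D D' : Type*} [DivisionRing D] [DivisionRing D'] {m n m' n' : ℕ}
    (φ : Matrix (Fin m) (Fin n) D → Matrix (Fin m') (Fin n') D') : Prop :=
  ∀ A B, rk (A - B) = 1 → rk (φ A - φ B) = 1

/-- A degenerate graph homomorphism. -/
def Degenerate {D D' : Type*} [DivisionRing D] [DivisionRing D'] {m n m' n' : ℕ}
    (φ : Matrix (Fin m) (Fin n) D → Matrix (Fin m') (Fin n') D') : Prop :=
  ∃ (A : Matrix (Fin m) (Fin n) D) (M N : Set (Matrix (Fin m') (Fin n') D')),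
    rk A ≤ 1 ∧ DiffTypes M N ∧ φ '' uball A ⊆ M ∪ N ∧ φ A ∈ M ∩ N

/-- A (vertex) colouring: the image is an adjacent set. -/
def IsColouring {D D' : Type*} [DivisionRing D] [DivisionRing D'] {m n m' n' : ℕ}
    (φ : Matrix (Fin m) (Fin n) D → Matrix (Fin m') (Fin n') D') : Prop :=
  IsAdjSet (Set.range φ)

/-- A nonzero ring homomorphism. -/
def IsRingHomNZ {D D' : Type*} [DivisionRing D] [DivisionRing D'] (τ : D → D') : Prop :=
  (∀ x y, τ (x + y) = τ x + τ y) ∧ (∀ x y, τ (x * y) = τ x * τ y) ∧ τ ≠ 0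

/-- A nonzero ring anti-homomorphism. -/
def IsAntiRingHomNZ {D D' : Type*} [DivisionRing D] [DivisionRing D'] (σ : D → D') : Prop :=
  (∀ x y, σ (x + y) = σ x + σ y) ∧ (∀ x y, σ (x * y) = σ y * σ x) ∧ σ ≠ 0

/-- The `m × n` matrix with the matrix `Y` in the upper-left corner and zeros elsewhere. -/
def corner {D : Type*} [Zero D] {k l m n : ℕ} (Y : Matrix (Fin k) (Fin l) D) :
    Matrix (Fin m) (Fin n) D :=
  Matrix.of fun i j =>
    if hi : (i : ℕ) < k then if hj : (j : ℕ) < l then Y ⟨i, hi⟩ ⟨j, hj⟩ else 0 else 0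

/-- A line of the affine geometry `AG(M)` of a maximal set `M`: a nonempty intersection
`M ∩ N` with `N` a maximal set of the other type. -/
def IsLine {D : Type*} [DivisionRing D] {m n : ℕ}
    (M ℓ : Set (Matrix (Fin m) (Fin n) D)) : Prop :=
  ∃ N : Set (Matrix (Fin m) (Fin n) D), DiffTypes M N ∧ (M ∩ N).Nonempty ∧ ℓ = M ∩ N

/-- Condition (I). -/
def CondI {D D' : Type*} [DivisionRing D] [DivisionRing D'] {m n m' n' : ℕ}
    (φ : Matrix (Fin m) (Fin n) D → Matrix (Fin m') (Fin n') D') : Prop :=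
  ∀ M N : Set (Matrix (Fin m) (Fin n) D), DiffTypes M N → (0 : Matrix (Fin m) (Fin n) D) ∈ M ∩ N →
    ∃ M' N' : Set (Matrix (Fin m') (Fin n') D'),
      DiffTypes M' N' ∧ φ '' M ⊆ M' ∧ φ '' N ⊆ N'

/-- Condition (i) of the additive homomorphism theorem: `φ(X) = P X^τ Q`. -/
def Cond1 {D D' : Type*} [DivisionRing D] [DivisionRing D'] {m n m' n' : ℕ}
    (φ : Matrix (Fin m) (Fin n) D → Matrix (Fin m') (Fin n') D') : Prop :=
  ∃ (P : Matrix (Fin m') (Fin m) D') (Q : Matrix (Fin n) (Fin n') D') (τ : D → D'),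
    2 ≤ rk P ∧ 2 ≤ rk Q ∧ IsRingHomNZ τ ∧ ∀ X, φ X = P * X.map τ * Q

/-- Condition (ii) of the additive homomorphism theorem: `φ(X) = P (ᵗX^σ) Q`. -/
def Cond2 {D D' : Type*} [DivisionRing D] [DivisionRing D'] {m n m' n' : ℕ}
    (φ : Matrix (Fin m) (Fin n) D → Matrix (Fin m') (Fin n') D') : Prop :=
  ∃ (P : Matrix (Fin m') (Fin n) D') (Q : Matrix (Fin m) (Fin n') D') (σ : D → D'),
    2 ≤ rk P ∧ 2 ≤ rk Q ∧ IsAntiRingHomNZ σ ∧ ∀ X, φ X = P * (X.map σ)ᵀ * Q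


open Submodule

section Aux
variable {K : Type*} [DivisionRing K]

/-- The left-linear map `v ↦ v ᵥ* M` on row vectors. -/
noncomputable def rowMap {a b : ℕ} (M : Matrix (Fin a) (Fin b) K) :
    (Fin a → K) →ₗ[K] (Fin b → K) where
  toFun v := fun j => ∑ i, v i * M i j
  map_add' u v := by
    funext j
    simp [add_mul, Finset.sum_add_distrib]
  map_smul' c v := by
    funext j
    simp [Finset.mul_sum, mul_assoc]

lemma rowMap_apply {a b : ℕ} (M : Matrix (Fin a) (Fin b) K) (v : Fin a → K) (j : Fin b) :
    rowMap M v j = ∑ i, v i * M i j := rfl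

lemma rowMap_single {a b : ℕ} (M : Matrix (Fin a) (Fin b) K) (i : Fin a) :
    rowMap M (Pi.single i 1) = M i := by
  funext j
  rw [rowMap_apply]
  simp [Pi.single_apply, ite_mul]

lemma rowMap_eq_sum_smul {a b : ℕ} (M : Matrix (Fin a) (Fin b) K) (v : Fin a → K) :
    rowMap M v = ∑ i, v i • M i := by
  funext j
  simp [rowMap_apply, Finset.sum_apply]

lemma range_rowMap {a b : ℕ} (M : Matrix (Fin a) (Fin b) K) :
    LinearMap.range (rowMap M) = span K (Set.range fun i => M i) := by
  apply le_antisymm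
  · rintro _ ⟨v, rfl⟩
    rw [rowMap_eq_sum_smul]
    exact sum_mem fun i _ => smul_mem _ _ (subset_span ⟨i, rfl⟩)
  · rw [span_le]
    rintro _ ⟨i, rfl⟩
    exact ⟨Pi.single i 1, rowMap_single M i⟩

lemma rowMap_mul {a b c : ℕ} (A : Matrix (Fin a) (Fin b) K) (B : Matrix (Fin b) (Fin c) K)
    (v : Fin a → K) : rowMap (A * B) v = rowMap B (rowMap A v) := by
  funext j
  simp only [rowMap_apply, Matrix.mul_apply, Finset.mul_sum, Finset.sum_mul]
  rw [Finset.sum_comm]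
  simp [mul_assoc]

lemma exists_left_inverse' {a b : ℕ} (M : Matrix (Fin a) (Fin b) K)
    (h : span K (Set.range fun i => M i) = ⊤) :
    ∃ Y : Matrix (Fin b) (Fin a) K, Y * M = 1 := by
  have hsur : ∀ w : Fin b → K, ∃ v, rowMap M v = w := by
    intro w
    have : w ∈ LinearMap.range (rowMap M) := by rw [range_rowMap, h]; trivial
    exact this
  choose c hc using hsur
  refine ⟨Matrix.of fun j i => c (Pi.single j 1) i, ?_⟩
  ext j j'
  have h2 := congrFun (hc (Pi.single j 1)) j'
  rw [rowMap_apply] at h2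
  simp only [Matrix.mul_apply, Matrix.of_apply]
  rw [h2]
  simp [Matrix.one_apply, Pi.single_apply, eq_comm]

lemma isUnit_of_rows_basis {N : ℕ} (Q : Matrix (Fin N) (Fin N) K)
    (hspan : span K (Set.range fun i => Q i) = ⊤)
    (hind : LinearIndependent K (fun i => Q i)) : IsUnit Q := by
  obtain ⟨C, hC⟩ := exists_left_inverse' Q hspan
  have hinj : ∀ v : Fin N → K, rowMap Q v = 0 → v = 0 := by
    intro v hv
    have h2 : (∑ i, v i • Q i) = 0 := by rw [← rowMap_eq_sum_smul, hv]
    have := Fintype.linearIndependent_iff.mp hind v h2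
    funext i; exact this i
  have hQC : ∀ v, rowMap (Q * C) v = v := by
    intro v
    have key : rowMap Q (rowMap (Q * C) v - v) = 0 := by
      rw [map_sub, ← rowMap_mul, Matrix.mul_assoc, hC, Matrix.mul_one, sub_self]
    have := hinj _ key
    rwa [sub_eq_zero] at this
  have hQC' : Q * C = 1 := by
    ext i j
    have := congrFun (by rw [rowMap_single] : rowMap (Q * C) (Pi.single i 1) = (Q * C) i) j
    rw [hQC] at this
    rw [← this]
    simp [Matrix.one_apply, Pi.single_apply, eq_comm]
  exact ⟨⟨Q, C, hQC', hC⟩, rfl⟩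

lemma exists_isUnit_rows_extend {t N : ℕ} (h : t ≤ N) (v : Fin t → (Fin N → K))
    (hv : LinearIndependent K v) :
    ∃ Q : Matrix (Fin N) (Fin N) K, IsUnit Q ∧
      ∀ k : Fin t, Q ⟨k.1, lt_of_lt_of_le k.2 h⟩ = v k := by
  obtain ⟨W, hW⟩ := (span K (Set.range v)).exists_isCompl
  have hts : t + Module.finrank K W = N := by
    have h1 := Submodule.finrank_add_eq_of_isCompl hW
    rw [finrank_span_eq_card hv] at h1
    simpa [Module.finrank_pi] using h1
  set s := Module.finrank K W with hs
  let bW := Module.finBasis K W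
  let u : Fin t ⊕ Fin s → (Fin N → K) := Sum.elim v (fun i => (bW i : Fin N → K))
  have hindW : LinearIndependent K (fun i : Fin s => (bW i : Fin N → K)) :=
    bW.linearIndependent.map' W.subtype (Submodule.ker_subtype W)
  have hspanW : span K (Set.range fun i : Fin s => (bW i : Fin N → K)) = W := by
    have h2 : (Set.range fun i : Fin s => (bW i : Fin N → K)) = W.subtype '' Set.range bW := by
      rw [← Set.range_comp]; rfl
    rw [h2, ← Submodule.map_span, bW.span_eq, Submodule.map_top, Submodule.range_subtype]
  have hu : LinearIndependent K u := hv.sum_type hindW (by rw [hspanW]; exact hW.disjoint)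
  have huspan : span K (Set.range u) = ⊤ := by
    have : Set.range u = Set.range v ∪ Set.range fun i : Fin s => (bW i : Fin N → K) :=
      Set.Sum.elim_range _ _
    rw [this, Submodule.span_union, hspanW, hW.sup_eq_top]
  let e : Fin N ≃ (Fin t ⊕ Fin s) := (finCongr hts.symm).trans finSumFinEquiv.symm
  refine ⟨Matrix.of fun i => u (e i), ?_, ?_⟩
  · apply isUnit_of_rows_basis
    · rw [show (Set.range fun i => (Matrix.of fun i => u (e i)) i) = Set.range u from
        e.surjective.range_comp u, huspan]
    · exact hu.comp e e.injective
  · intro k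
    show u (e ⟨k.1, _⟩) = v k
    have he : e ⟨k.1, lt_of_lt_of_le k.2 h⟩ = Sum.inl k := by
      show finSumFinEquiv.symm (finCongr hts.symm ⟨k.1, _⟩) = Sum.inl k
      have h3 : finCongr hts.symm ⟨k.1, lt_of_lt_of_le k.2 h⟩ = Fin.castAdd s k := by
        ext; rfl
      rw [h3, finSumFinEquiv_symm_apply_castAdd]
    rw [he]
    rfl

lemma rk_eq_one_decomp {a b : ℕ} {A : Matrix (Fin a) (Fin b) K} (h : rk A = 1) :
    ∃ (x : Fin a → K) (y : Fin b → K), ∀ i j, A i j = x i * y j := by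
  rw [rk] at h
  obtain ⟨w, hw0, hw⟩ := finrank_eq_one_iff'.mp h
  have hmem : ∀ i, A i ∈ span K (Set.range fun i => A i) := fun i => subset_span ⟨i, rfl⟩
  choose c hc using fun i => hw ⟨A i, hmem i⟩
  refine ⟨c, (w : Fin b → K), fun i j => ?_⟩
  have h1 := congrFun (congrArg Subtype.val (hc i)) j
  simpa using h1.symm

lemma rk_outer_eq_one {a b : ℕ} (x : Fin a → K) (y : Fin b → K) (i₀ : Fin a)
    (hx : x i₀ ≠ 0) (hy : y ≠ 0) :
    rk (Matrix.of fun i j => x i * y j) = 1 := by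
  have hrows : ∀ i, (Matrix.of fun i j => x i * y j) i = x i • y := by
    intro i; funext j; simp
  have hsp : span K (Set.range fun i => (Matrix.of fun i j => x i * y j) i) = span K {y} := by
    apply le_antisymm
    · rw [span_le]
      rintro _ ⟨i, rfl⟩
      show (Matrix.of fun i j => x i * y j) i ∈ (span K {y} : Submodule K (Fin b → K))
      rw [hrows]
      exact smul_mem _ _ (subset_span rfl)
    · rw [span_le, Set.singleton_subset_iff]
      have h1 : y = (x i₀)⁻¹ • ((Matrix.of fun i j => x i * y j) i₀) := by
        rw [hrows, smul_smul, inv_mul_cancel₀ hx, one_smul]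
      have h2 : ((x i₀)⁻¹ • (Matrix.of fun i j => x i * y j) i₀) ∈
          span K (Set.range fun i => (Matrix.of fun i j => x i * y j) i) :=
        smul_mem _ _ (subset_span ⟨i₀, rfl⟩)
      rwa [← h1] at h2
  rw [rk, hsp, finrank_span_singleton hy]

end Aux

section Aux2
variable {K : Type*} [DivisionRing K]

lemma corner_one_apply {r m n : ℕ} (i : Fin m) (j : Fin n) :
    (corner (1 : Matrix (Fin r) (Fin r) K) : Matrix (Fin m) (Fin n) K) i j
      = if (i : ℕ) = (j : ℕ) ∧ (i : ℕ) < r then 1 else 0 := by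
  show (if hi : (i : ℕ) < r then if hj : (j : ℕ) < r then
      (1 : Matrix (Fin r) (Fin r) K) ⟨i, hi⟩ ⟨j, hj⟩ else 0 else 0) = _
  split_ifs with h1 h2 h3 h3 <;>
    simp_all [Matrix.one_apply, Fin.ext_iff] <;> omega

lemma isUnit_unop_transpose {N : ℕ} {M : Matrix (Fin N) (Fin N) Kᵐᵒᵖ} (h : IsUnit M) :
    IsUnit (Matrix.of fun i j => (M j i).unop) := by
  obtain ⟨u, rfl⟩ := h
  have key : ∀ (A B : Matrix (Fin N) (Fin N) Kᵐᵒᵖ), B * A = 1 →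
      (Matrix.of fun i j => (A j i).unop) * (Matrix.of fun i j => (B j i).unop) = 1 := by
    intro A B hBA
    have hsum : ∀ (f : Fin N → Kᵐᵒᵖ), MulOpposite.unop (∑ k, f k) = ∑ k, MulOpposite.unop (f k) :=
      fun f => map_sum (MulOpposite.opAddEquiv (α := K)).symm f Finset.univ
    ext i j
    have h1 : ((B * A) j i).unop = ((1 : Matrix (Fin N) (Fin N) Kᵐᵒᵖ) j i).unop := by rw [hBA]
    rw [Matrix.mul_apply, hsum] at h1
    simp only [MulOpposite.unop_mul] at h1
    rw [Matrix.mul_apply]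
    simp only [Matrix.of_apply]
    rw [h1]
    simp only [Matrix.one_apply, eq_comm]
    split_ifs <;> simp
  exact ⟨⟨_, Matrix.of fun i j => ((u⁻¹).val j i).unop,
    key _ _ u.inv_val, key _ _ u.val_inv⟩, rfl⟩

end Aux2


/-- (Lemma `strong-degenerate-1`) normalisation of the images of the
matrices `diag(I_r, 0)` for `r = 1, …, n`. -/
theorem stmt18 {D D' : Type*} [DivisionRing D] [DivisionRing D'] {n m' n' : ℕ}
    (hn : 2 ≤ n) (hm' : n ≤ m') (hn' : n ≤ n')
    (φ : Matrix (Fin n) (Fin n) D → Matrix (Fin m') (Fin n') D')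
    (hhom : IsGraphHom φ) (h0 : φ 0 = 0)
    (hI : rk (φ (1 : Matrix (Fin n) (Fin n) D)) = n) :
    ∃ (P : Matrix (Fin m') (Fin m') D') (Q : Matrix (Fin n') (Fin n') D'),
      IsUnit P ∧ IsUnit Q ∧
      ∀ r : ℕ, 1 ≤ r → r ≤ n →
        φ (corner (1 : Matrix (Fin r) (Fin r) D)) =
          P * (corner (1 : Matrix (Fin r) (Fin r) D') : Matrix (Fin m') (Fin n') D') * Q := by
  classical
  have hstep : ∀ (r : ℕ) (hr : r < n),
      rk (φ (corner (1 : Matrix (Fin (r+1)) (Fin (r+1)) D)) -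
        φ (corner (1 : Matrix (Fin r) (Fin r) D))) = 1 := by
    intro r hr
    apply hhom
    have hd : (corner (1 : Matrix (Fin (r+1)) (Fin (r+1)) D) : Matrix (Fin n) (Fin n) D) -
        corner (1 : Matrix (Fin r) (Fin r) D)
        = Matrix.of fun (i j : Fin n) => (if (i : ℕ) = r then (1:D) else 0) *
            (if (j : ℕ) = r then (1:D) else 0) := by
      ext i j
      simp only [Matrix.sub_apply, corner_one_apply, Matrix.of_apply]
      split_ifs <;> simp_all <;> omega
    rw [hd]
    refine rk_outer_eq_one _ _ ⟨r, hr⟩ (by simp) ?_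
    intro hzero
    have := congrFun hzero ⟨r, hr⟩
    simp at this
  have hstep' : ∀ k : Fin n, rk (φ (corner (1 : Matrix (Fin (k.1+1)) (Fin (k.1+1)) D)) -
      φ (corner (1 : Matrix (Fin k.1) (Fin k.1) D))) = 1 := fun k => hstep k.1 k.2
  choose x y hxy using fun k : Fin n => rk_eq_one_decomp (hstep' k)
  set OP : Fin n → Matrix (Fin m') (Fin n') D' :=
    fun k => Matrix.of fun i j => x k i * y k j with hOPdef
  have hdiff : ∀ (r : ℕ) (hr : r < n),
      φ (corner (1 : Matrix (Fin (r+1)) (Fin (r+1)) D)) =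
        φ (corner (1 : Matrix (Fin r) (Fin r) D)) + OP ⟨r, hr⟩ := by
    intro r hr
    ext i j
    have h2 : φ (corner (1 : Matrix (Fin (r+1)) (Fin (r+1)) D)) i j
        - φ (corner (1 : Matrix (Fin r) (Fin r) D)) i j = x ⟨r, hr⟩ i * y ⟨r, hr⟩ j :=
      hxy ⟨r, hr⟩ i j
    show _ = (φ (corner (1 : Matrix (Fin r) (Fin r) D)) + OP ⟨r, hr⟩) i j
    rw [Matrix.add_apply]
    exact sub_eq_iff_eq_add'.mp h2
  have h00 : φ (corner (1 : Matrix (Fin 0) (Fin 0) D)) = 0 := by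
    have hc0 : (corner (1 : Matrix (Fin 0) (Fin 0) D) : Matrix (Fin n) (Fin n) D) = 0 := by
      ext i j
      rw [corner_one_apply]
      simp
    rw [hc0, h0]
  have htel : ∀ r : ℕ, r ≤ n → φ (corner (1 : Matrix (Fin r) (Fin r) D)) =
      ∑ k ∈ Finset.univ.filter (fun k : Fin n => k.1 < r), OP k := by
    intro r
    induction r with
    | zero => intro _; simpa using h00
    | succ r ih =>
      intro hr
      have hrn : r < n := hr
      rw [hdiff r hrn, ih hrn.le]
      have hfe : Finset.univ.filter (fun k : Fin n => k.1 < r + 1)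
          = insert (⟨r, hrn⟩ : Fin n) (Finset.univ.filter fun k : Fin n => k.1 < r) := by
        ext k
        simp only [Finset.mem_filter, Finset.mem_insert, Finset.mem_univ, true_and, Fin.ext_iff]
        omega
      rw [hfe, Finset.sum_insert (by simp)]
      abel
  set X : Matrix (Fin m') (Fin n) D' := Matrix.of fun i k => x k i with hXdef
  set Y : Matrix (Fin n) (Fin n') D' := Matrix.of fun k j => y k j with hYdef
  have hfull : Finset.univ.filter (fun k : Fin n => k.1 < n) = Finset.univ := by
    ext k; simp [k.2]
  have hBn : φ (1 : Matrix (Fin n) (Fin n) D) = ∑ k : Fin n, OP k := by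
    have hcn : (corner (1 : Matrix (Fin n) (Fin n) D) : Matrix (Fin n) (Fin n) D) = 1 := by
      ext i j
      rw [corner_one_apply, Matrix.one_apply]
      simp [Fin.val_eq_val, i.isLt]
    have h1 := htel n le_rfl
    rw [hcn, hfull] at h1
    exact h1
  have hrkS : rk (∑ k : Fin n, OP k) = n := by rw [← hBn]; exact hI
  have hrows : (fun i => (∑ k : Fin n, OP k) i) = (rowMap Y) ∘ (fun i => X i) := by
    funext i; funext j
    simp [rowMap_apply, Finset.sum_apply, hOPdef, hXdef, hYdef, Matrix.sum_apply]
  have hrkS' : Module.finrank D'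
      (span D' (Set.range fun i => (∑ k : Fin n, OP k) i)) = n := hrkS
  have hmap : span D' (Set.range fun i => (∑ k : Fin n, OP k) i)
      = Submodule.map (rowMap Y) (span D' (Set.range fun i => X i)) := by
    rw [Submodule.map_span]
    congr 1
    rw [hrows, Set.range_comp]
  have hspanX : span D' (Set.range fun i => X i) = ⊤ := by
    have h2 := Submodule.finrank_map_le (rowMap Y) (span D' (Set.range fun i => X i))
    rw [← hmap, hrkS'] at h2
    apply Submodule.eq_top_of_finrank_eq
    have h3 : Module.finrank D' (span D' (Set.range fun i => X i))
        ≤ Module.finrank D' (Fin n → D') := Submodule.finrank_le _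
    have h4 : Module.finrank D' (Fin n → D') = n := by
      rw [Module.finrank_pi (ι := Fin n) (R := D'), Fintype.card_fin]
    omega
  have hyind : LinearIndependent D' y := by
    rw [linearIndependent_iff_card_eq_finrank_span]
    have hle : span D' (Set.range fun i => (∑ k : Fin n, OP k) i)
        ≤ span D' (Set.range y) := by
      rw [Submodule.span_le]
      rintro _ ⟨i, rfl⟩
      show (∑ k : Fin n, OP k) i ∈ _
      rw [congrFun hrows i]
      have hmm : rowMap Y ((fun i => X i) i) ∈ LinearMap.range (rowMap Y) := ⟨_, rfl⟩
      rw [range_rowMap] at hmm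
      exact hmm
    have h1 := Submodule.finrank_mono hle
    rw [hrkS'] at h1
    have h2 := finrank_range_le_card (R := D') y
    simp only [Set.finrank, Fintype.card_fin] at h2 ⊢
    omega
  obtain ⟨Q, hQunit, hQrows⟩ := exists_isUnit_rows_extend hn' y hyind
  obtain ⟨Z, hZ⟩ := exists_left_inverse' X hspanX
  set x' : Fin n → (Fin m' → D'ᵐᵒᵖ) := fun k i => MulOpposite.op (X i k) with hx'def
  have hx'ind : LinearIndependent D'ᵐᵒᵖ x' := by
    rw [Fintype.linearIndependent_iff]
    intro g hg
    have hsum : ∀ (f : Fin n → D'), MulOpposite.op (∑ k, f k) = ∑ k, MulOpposite.op (f k) :=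
      fun f => map_sum (MulOpposite.opAddEquiv (α := D')) f Finset.univ
    have hv : X.mulVec (fun k => (g k).unop) = 0 := by
      funext i
      have h1 := congrFun hg i
      simp only [Finset.sum_apply, Pi.smul_apply, hx'def, Pi.zero_apply, smul_eq_mul] at h1
      have h2 : MulOpposite.op (∑ k, X i k * (g k).unop) = (0 : D'ᵐᵒᵖ) := by
        rw [hsum]
        simpa [MulOpposite.op_mul] using h1
      have h3 : (∑ k, X i k * (g k).unop) = 0 := by
        simpa using congrArg MulOpposite.unop h2
      show (X.mulVec fun k => (g k).unop) i = 0
      simpa [Matrix.mulVec, dotProduct] using h3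
    have hvz : (fun k => (g k).unop) = 0 := by
      have h4 : Z.mulVec (X.mulVec fun k => (g k).unop) = 0 := by
        rw [hv, Matrix.mulVec_zero]
      rwa [Matrix.mulVec_mulVec, hZ, Matrix.one_mulVec] at h4
    intro k
    have h5 := congrFun hvz k
    simpa [MulOpposite.unop_eq_zero_iff] using h5
  obtain ⟨P', hP'unit, hP'rows⟩ := exists_isUnit_rows_extend hm' x' hx'ind
  set P : Matrix (Fin m') (Fin m') D' := Matrix.of fun i j => (P' j i).unop with hPdef
  have hPunit : IsUnit P := isUnit_unop_transpose hP'unit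
  refine ⟨P, Q, hPunit, hQunit, ?_⟩
  intro r hr1 hrn
  rw [htel r hrn]
  set u : Fin n → Fin m' → D' := fun k => Pi.single ⟨k.1, lt_of_lt_of_le k.2 hm'⟩ 1 with hudef
  set w : Fin n → Fin n' → D' := fun k => Pi.single ⟨k.1, lt_of_lt_of_le k.2 hn'⟩ 1 with hwdef
  have hu : ∀ (k : Fin n) (a : Fin m'), u k a = if (a : ℕ) = k.1 then 1 else 0 := by
    intro k a
    by_cases h : (a : ℕ) = k.1
    · have ha : a = ⟨k.1, lt_of_lt_of_le k.2 hm'⟩ := Fin.ext h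
      simp [hudef, ha, h]
    · have ha : a ≠ ⟨k.1, lt_of_lt_of_le k.2 hm'⟩ := fun hc => h (by rw [hc])
      simp [hudef, Pi.single_eq_of_ne ha, h]
  have hw : ∀ (k : Fin n) (b : Fin n'), w k b = if (b : ℕ) = k.1 then 1 else 0 := by
    intro k b
    by_cases h : (b : ℕ) = k.1
    · have hb : b = ⟨k.1, lt_of_lt_of_le k.2 hn'⟩ := Fin.ext h
      simp [hwdef, hb, h]
    · have hb : b ≠ ⟨k.1, lt_of_lt_of_le k.2 hn'⟩ := fun hc => h (by rw [hc])
      simp [hwdef, Pi.single_eq_of_ne hb, h]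
  have hterm : ∀ k : Fin n, P * Matrix.of (fun a b => u k a * w k b) * Q = OP k := by
    intro k
    have hQk : Q ⟨k.1, lt_of_lt_of_le k.2 hn'⟩ = y k := hQrows k
    have hPk : ∀ i, P i ⟨k.1, lt_of_lt_of_le k.2 hm'⟩ = x k i := by
      intro i
      show (P' ⟨k.1, lt_of_lt_of_le k.2 hm'⟩ i).unop = x k i
      rw [hP'rows k]
      rfl
    ext i j
    rw [Matrix.mul_assoc, Matrix.mul_apply]
    have hMQ : ∀ a, (Matrix.of (fun a b => u k a * w k b) * Q) a j
        = u k a * Q ⟨k.1, lt_of_lt_of_le k.2 hn'⟩ j := by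
      intro a
      rw [Matrix.mul_apply]
      rw [Finset.sum_eq_single (⟨k.1, lt_of_lt_of_le k.2 hn'⟩ : Fin n')]
      · simp [hwdef, mul_assoc]
      · intro b _ hb
        have hwb : w k b = 0 := Pi.single_eq_of_ne hb _
        simp [hwb]
      · simp
    rw [Finset.sum_congr rfl fun a _ => by rw [hMQ a]]
    rw [Finset.sum_eq_single (⟨k.1, lt_of_lt_of_le k.2 hm'⟩ : Fin m')]
    · simp [hudef, hPk, hQk, hOPdef]
    · intro a _ ha
      have hua : u k a = 0 := Pi.single_eq_of_ne ha _
      simp [hua]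
    · simp
  have hcorner : (corner (1 : Matrix (Fin r) (Fin r) D') : Matrix (Fin m') (Fin n') D')
      = ∑ k ∈ Finset.univ.filter (fun k : Fin n => k.1 < r),
          Matrix.of (fun a b => u k a * w k b) := by
    ext a b
    rw [corner_one_apply, Matrix.sum_apply]
    simp only [Matrix.of_apply]
    by_cases hab : (a : ℕ) = (b : ℕ) ∧ (a : ℕ) < r
    · obtain ⟨h1, h2⟩ := hab
      have han : (a : ℕ) < n := lt_of_lt_of_le h2 hrn
      rw [if_pos ⟨h1, h2⟩]
      have hsum : ∑ k ∈ Finset.univ.filter (fun k : Fin n => k.1 < r), u k a * w k b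
          = u ⟨(a : ℕ), han⟩ a * w ⟨(a : ℕ), han⟩ b := by
        apply Finset.sum_eq_single_of_mem
        · exact Finset.mem_filter.mpr ⟨Finset.mem_univ _, h2⟩
        · intro k hk hne
          rw [hu]
          rw [if_neg, zero_mul]
          intro hc
          exact hne (Fin.ext hc.symm)
      rw [hsum, hu, hw]
      simp [← h1]
    · rw [if_neg hab]
      refine (Finset.sum_eq_zero ?_).symm
      intro k hk
      rw [Finset.mem_filter] at hk
      rw [hu, hw]
      by_cases ha : (a : ℕ) = k.1
      · rw [if_pos ha, one_mul, if_neg]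
        intro hb
        exact hab ⟨by omega, by omega⟩
      · rw [if_neg ha, zero_mul]
  rw [hcorner, Matrix.mul_sum, Matrix.sum_mul]
  exact (Finset.sum_congr rfl fun k _ => hterm k).symm
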